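/- Let (p_n) be a sequence of positive integers, and for each n let Σ_n and Σ̃_n be real symmetric p_n×p_n matrices such that sup_n ‖Σ_n‖ < ∞, sup_n ‖Σ̃_n‖ < ∞ and ‖Σ_n − Σ̃_n‖ → 0 as n → ∞. Assume the empirical spectral distributions μ_{Σ̃_n} converge weakly to a probability measure ν^∞ whose cumulative distribution function F_{ν^∞} is β-Hölder continuous for some β ∈ (0,1]. Then there exist C > 0 and N ∈ ℕ such that for all n ≥ N, all y ∈ (0,1) and all A > 0: D(μ_{Σ̃_n}, μ_{Σ_n}) ≤ C·(A·‖Σ_n − Σ̃_n‖/y² + 1/(y²·A) + y^β + D(μ_{Σ̃_n}, ν^∞)). -/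

import Mathlib

open MeasureTheory ProbabilityTheory Filter
open scoped NNReal

/-- Spectral (operator) norm of a real matrix. -/
noncomputable def specNorm {m p : Type*} [Fintype m] [Fintype p] [DecidableEq p]
    (M : Matrix m p ℝ) : ℝ :=
  ‖(Matrix.toEuclideanLin M).toContinuousLinearMap‖

/-- Empirical spectral distribution `μ_M = (1/p)·∑_{i} δ_{λ_i}` of a Hermitian
real matrix, as a measure on `ℝ`. -/
noncomputable def esd {p : ℕ} (M : Matrix (Fin p) (Fin p) ℝ) (hM : M.IsHermitian) :
    Measure ℝ :=
  ((p : ℝ≥0))⁻¹ • ∑ i, Measure.dirac (hM.eigenvalues i)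

/-- Cumulative distribution function of a measure on `ℝ`. -/
noncomputable def cdf' (μ : Measure ℝ) (t : ℝ) : ℝ := (μ (Set.Iic t)).toReal

/-- Kolmogorov distance between two measures on `ℝ`. -/
noncomputable def kolDist (μ ν : Measure ℝ) : ℝ := ⨆ t : ℝ, |cdf' μ t - cdf' ν t|

open scoped ENNReal RealInnerProductSpace
set_option synthInstance.maxHeartbeats 1000000
set_option maxHeartbeats 1000000
lemma specNorm_nonneg {m p : Type*} [Fintype m] [Fintype p] [DecidableEq p]
    (M : Matrix m p ℝ) : 0 ≤ specNorm M := norm_nonneg _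

lemma specNorm_sub_comm {p : Type*} [Fintype p] [DecidableEq p]
    (A B : Matrix p p ℝ) : specNorm (A - B) = specNorm (B - A) := by
  unfold specNorm
  rw [← neg_sub B A, map_neg, map_neg, norm_neg]

lemma inner_toEuclideanLin_le {n : Type*} [Fintype n] [DecidableEq n]
    (M : Matrix n n ℝ) (x : EuclideanSpace ℝ n) :
    ⟪Matrix.toEuclideanLin M x, x⟫ ≤ specNorm M * ‖x‖ ^ 2 := by
  have h1 : ⟪Matrix.toEuclideanLin M x, x⟫ ≤ ‖Matrix.toEuclideanLin M x‖ * ‖x‖ :=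
    real_inner_le_norm _ _
  have h2 : ‖Matrix.toEuclideanLin M x‖ ≤ specNorm M * ‖x‖ := by
    have := (Matrix.toEuclideanLin M).toContinuousLinearMap.le_opNorm x
    simpa [specNorm] using this
  nlinarith [norm_nonneg x, norm_nonneg (Matrix.toEuclideanLin M x), specNorm_nonneg M]

lemma repr_zero_of_mem_span {n : Type*} [Fintype n] [DecidableEq n]
    {b : OrthonormalBasis n ℝ (EuclideanSpace ℝ n)}
    {S : Finset n} {x : EuclideanSpace ℝ n}
    (hx : x ∈ Submodule.span ℝ (⇑b '' ↑S)) {i : n} (hi : i ∉ S) :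
    b.repr x i = 0 := by
  induction hx using Submodule.span_induction with
  | mem y hy =>
    obtain ⟨j, hj, rfl⟩ := hy
    rw [b.repr_self]
    have : i ≠ j := fun h => hi (h ▸ hj)
    simp [EuclideanSpace.single_apply, this]
  | zero => simp
  | add u v _ _ hu hv => simp [hu, hv]
  | smul c u _ hu => simp [hu]
lemma quadform_eq {n : ℕ} (A : Matrix (Fin n) (Fin n) ℝ) (hA : A.IsHermitian)
    (x : EuclideanSpace ℝ (Fin n)) :
    ⟪Matrix.toEuclideanLin A x, x⟫ =
      ∑ i, hA.eigenvalues i * (hA.eigenvectorBasis.repr x i) ^ 2 := by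
  set b := hA.eigenvectorBasis with hb
  have hsymm := (Matrix.isHermitian_iff_isSymmetric.mp hA)
  have hAb : ∀ i, Matrix.toEuclideanLin A (b i) = hA.eigenvalues i • (b i) := by
    intro i
    ext j
    have := congrFun (hA.mulVec_eigenvectorBasis i) j
    simpa [Matrix.toEuclideanLin_apply] using this
  have hrepr : ∀ i, b.repr (Matrix.toEuclideanLin A x) i = hA.eigenvalues i * b.repr x i := by
    intro i
    rw [OrthonormalBasis.repr_apply_apply, ← hsymm (b i) x, hAb i,
      real_inner_smul_left, ← OrthonormalBasis.repr_apply_apply]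
  calc ⟪Matrix.toEuclideanLin A x, x⟫
      = ⟪b.repr (Matrix.toEuclideanLin A x), b.repr x⟫ := (b.repr.inner_map_map _ _).symm
    _ = ∑ i, b.repr (Matrix.toEuclideanLin A x) i * b.repr x i := by
        rw [PiLp.inner_apply]
        simp only [RCLike.inner_apply, conj_trivial]
        exact Finset.sum_congr rfl fun i _ => mul_comm _ _
    _ = ∑ i, hA.eigenvalues i * (b.repr x i) ^ 2 := by
        refine Finset.sum_congr rfl fun i _ => ?_
        rw [hrepr i]; ring


lemma norm_sq_eq {n : Type*} [Fintype n] [DecidableEq n]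
    (b : OrthonormalBasis n ℝ (EuclideanSpace ℝ n)) (x : EuclideanSpace ℝ n) :
    ‖x‖ ^ 2 = ∑ i, (b.repr x i) ^ 2 := by
  rw [← real_inner_self_eq_norm_sq, ← b.repr.inner_map_map x x, PiLp.inner_apply]
  simp only [RCLike.inner_apply, conj_trivial, pow_two]

lemma quad_le {n : ℕ} (A : Matrix (Fin n) (Fin n) ℝ) (hA : A.IsHermitian)
    {S : Finset (Fin n)} {t : ℝ} (hS : ∀ i ∈ S, hA.eigenvalues i ≤ t)
    {x : EuclideanSpace ℝ (Fin n)}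
    (hx : x ∈ Submodule.span ℝ (⇑hA.eigenvectorBasis '' ↑S)) :
    ⟪Matrix.toEuclideanLin A x, x⟫ ≤ t * ‖x‖ ^ 2 := by
  rw [quadform_eq A hA x, norm_sq_eq hA.eigenvectorBasis x, Finset.mul_sum]
  refine Finset.sum_le_sum fun i _ => ?_
  by_cases hi : i ∈ S
  · have := hS i hi
    nlinarith [sq_nonneg (hA.eigenvectorBasis.repr x i)]
  · rw [repr_zero_of_mem_span hx hi]; simp

lemma quad_gt {n : ℕ} (A : Matrix (Fin n) (Fin n) ℝ) (hA : A.IsHermitian)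
    {S : Finset (Fin n)} {t : ℝ} (hS : ∀ i ∈ S, t < hA.eigenvalues i)
    {x : EuclideanSpace ℝ (Fin n)}
    (hx : x ∈ Submodule.span ℝ (⇑hA.eigenvectorBasis '' ↑S)) (hx0 : x ≠ 0) :
    t * ‖x‖ ^ 2 < ⟪Matrix.toEuclideanLin A x, x⟫ := by
  rw [quadform_eq A hA x, norm_sq_eq hA.eigenvectorBasis x, Finset.mul_sum]
  obtain ⟨i0, hi0⟩ : ∃ i, hA.eigenvectorBasis.repr x i ≠ 0 := by
    by_contra h
    push_neg at h
    apply hx0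
    have : hA.eigenvectorBasis.repr x = 0 := by ext i; exact h i
    simpa using congrArg hA.eigenvectorBasis.repr.symm this
  have hi0S : i0 ∈ S := by
    by_contra h
    exact hi0 (repr_zero_of_mem_span hx h)
  refine Finset.sum_lt_sum (fun i _ => ?_) ⟨i0, Finset.mem_univ i0, ?_⟩
  · by_cases hi : i ∈ S
    · nlinarith [sq_nonneg (hA.eigenvectorBasis.repr x i), hS i hi]
    · rw [repr_zero_of_mem_span hx hi]; simp
  · have h1 := hS i0 hi0S
    have h2 : 0 < (hA.eigenvectorBasis.repr x i0) ^ 2 := by positivity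
    nlinarith
lemma finrank_span_ob {n : ℕ} (b : OrthonormalBasis (Fin n) ℝ (EuclideanSpace ℝ (Fin n)))
    (S : Finset (Fin n)) :
    Module.finrank ℝ (Submodule.span ℝ (⇑b '' ↑S)) = S.card := by
  rw [Set.image_eq_range]
  have hli : LinearIndependent ℝ (fun x : (↑S : Set (Fin n)) => b ↑x) :=
    b.orthonormal.linearIndependent.comp _ Subtype.coe_injective
  rw [finrank_span_eq_card hli]
  simp

lemma weyl_count {n : ℕ} (A B : Matrix (Fin n) (Fin n) ℝ)
    (hA : A.IsHermitian) (hB : B.IsHermitian) (t d : ℝ)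
    (hd : specNorm (A - B) ≤ d) :
    (Finset.univ.filter fun i => hA.eigenvalues i ≤ t).card ≤
      (Finset.univ.filter fun i => hB.eigenvalues i ≤ t + d).card := by
  by_contra hlt
  push_neg at hlt
  set S := Finset.univ.filter fun i => hA.eigenvalues i ≤ t with hS
  set T := Finset.univ.filter fun i => hB.eigenvalues i ≤ t + d with hT
  set V := Submodule.span ℝ (⇑hA.eigenvectorBasis '' ↑S) with hV
  set W := Submodule.span ℝ (⇑hB.eigenvectorBasis '' ↑(Tᶜ)) with hW
  have hdV : Module.finrank ℝ V = S.card := finrank_span_ob _ _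
  have hdW : Module.finrank ℝ W = n - T.card := by
    rw [finrank_span_ob _ _, Finset.card_compl, Fintype.card_fin]
  have hsum := Submodule.finrank_sup_add_finrank_inf_eq V W
  have hle : Module.finrank ℝ ↥(V ⊔ W) ≤ n := by
    have := Submodule.finrank_le (V ⊔ W)
    rwa [finrank_euclideanSpace, Fintype.card_fin] at this
  have hScard : S.card ≤ n := by
    simpa using Finset.card_le_univ S
  have hpos : 0 < Module.finrank ℝ ↥(V ⊓ W) := by omega
  have hne : (V ⊓ W : Submodule ℝ (EuclideanSpace ℝ (Fin n))) ≠ ⊥ := by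
    intro h
    rw [h, finrank_bot] at hpos
    exact lt_irrefl 0 hpos
  obtain ⟨x, hx, hx0⟩ := Submodule.ne_bot_iff _ |>.mp hne
  have hxV : x ∈ V := hx.1
  have hxW : x ∈ W := hx.2
  have q1 : ⟪Matrix.toEuclideanLin A x, x⟫ ≤ t * ‖x‖ ^ 2 := by
    refine quad_le A hA (fun i hi => ?_) hxV
    rw [hS] at hi
    exact (Finset.mem_filter.mp hi).2
  have q2 : (t + d) * ‖x‖ ^ 2 < ⟪Matrix.toEuclideanLin B x, x⟫ := by
    refine quad_gt B hB (fun i hi => ?_) hxW hx0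
    rw [Finset.mem_compl, hT] at hi
    exact not_le.mp fun h => hi (Finset.mem_filter.mpr ⟨Finset.mem_univ i, h⟩)
  have q3 : ⟪Matrix.toEuclideanLin B x, x⟫ - ⟪Matrix.toEuclideanLin A x, x⟫ ≤ d * ‖x‖ ^ 2 := by
    have he : Matrix.toEuclideanLin (B - A) x =
        Matrix.toEuclideanLin B x - Matrix.toEuclideanLin A x := by
      rw [map_sub]; rfl
    have h1 := inner_toEuclideanLin_le (B - A) x
    rw [he, inner_sub_left] at h1
    have h2 : specNorm (B - A) ≤ d := by rwa [specNorm_sub_comm]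
    nlinarith [sq_nonneg ‖x‖]
  have hxn : ‖x‖ ≠ 0 := norm_ne_zero_iff.mpr hx0
  have hx2 : 0 < ‖x‖ ^ 2 := by positivity
  nlinarith
lemma cdf'_esd {q : ℕ} (M : Matrix (Fin q) (Fin q) ℝ) (hM : M.IsHermitian) (t : ℝ) :
    cdf' (esd M hM) t =
      ((Finset.univ.filter fun i => hM.eigenvalues i ≤ t).card : ℝ) / q := by
  unfold cdf' esd
  rw [Measure.smul_apply, Measure.finset_sum_apply]
  have h : ∀ i : Fin q, Measure.dirac (hM.eigenvalues i) (Set.Iic t)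
      = if hM.eigenvalues i ≤ t then (1 : ℝ≥0∞) else 0 := by
    intro i
    rw [Measure.dirac_apply' _ measurableSet_Iic]
    by_cases h : hM.eigenvalues i ≤ t <;> simp [Set.indicator_apply, Set.mem_Iic, h]
  rw [Finset.sum_congr rfl (fun i _ => h i), Finset.sum_boole]
  simp [ENNReal.smul_def, ENNReal.toReal_mul, div_eq_mul_inv, mul_comm]

lemma cdf'_nonneg (μ : Measure ℝ) (t : ℝ) : 0 ≤ cdf' μ t := ENNReal.toReal_nonneg

lemma cdf'_esd_le_one {q : ℕ} (hq : 0 < q) (M : Matrix (Fin q) (Fin q) ℝ)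
    (hM : M.IsHermitian) (t : ℝ) : cdf' (esd M hM) t ≤ 1 := by
  rw [cdf'_esd]
  rw [div_le_one (by exact_mod_cast hq)]
  have hcard : (Finset.univ.filter fun i => hM.eigenvalues i ≤ t).card ≤ q := by
    simpa using Finset.card_le_univ (Finset.univ.filter fun i => hM.eigenvalues i ≤ t)
  exact_mod_cast hcard

lemma cdf'_prob_le_one (μ : Measure ℝ) [IsProbabilityMeasure μ] (t : ℝ) : cdf' μ t ≤ 1 := by
  unfold cdf'
  have := prob_le_one (μ := μ) (s := Set.Iic t)
  exact ENNReal.toReal_le_of_le_ofReal one_pos.le (by simpa using this)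

lemma arith_key (H K d y A β : ℝ) (hH : 0 < H) (hK : 0 ≤ K) (hd0 : 0 ≤ d) (hd1 : d ≤ 1)
    (hy0 : 0 < y) (hy1 : y < 1) (hA : 0 < A) (hβ : 0 < β) :
    2 * K + H * d ^ β ≤ (2 + H) * (A * d / y ^ 2 + 1 / (y ^ 2 * A) + y ^ β + K) := by
  have hyβ : (0:ℝ) ≤ y ^ β := Real.rpow_nonneg hy0.le β
  have h1 : (0:ℝ) ≤ A * d / y ^ 2 := by positivity
  have h2 : (0:ℝ) ≤ 1 / (y ^ 2 * A) := by positivity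
  rcases le_or_gt d y with h | h
  · have hdy : d ^ β ≤ y ^ β := Real.rpow_le_rpow hd0 h hβ.le
    nlinarith
  · have hterm : 1 ≤ A * d / y ^ 2 + 1 / (y ^ 2 * A) := by
      rcases le_or_gt 1 (A * d) with h3 | h3
      · have hy2 : y ^ 2 ≤ 1 := by nlinarith
        have : 1 / y ^ 2 ≤ A * d / y ^ 2 := by gcongr
        have h4 : (1:ℝ) ≤ 1 / y ^ 2 := by
          rw [le_div_iff₀ (by positivity)]; linarith
        linarith
      · have hd' : 0 < d := lt_trans hy0 h
        have hA' : A < 1 / d := by rw [lt_div_iff₀ hd']; linarith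
        have h5 : y ^ 2 * A < d := by
          calc y ^ 2 * A < d ^ 2 * (1 / d) := by
                apply mul_lt_mul' ?_ hA' hA.le (by positivity)
                nlinarith
            _ = d := by rw [pow_two]; field_simp
        have h6 : (1:ℝ) ≤ 1 / (y ^ 2 * A) := by
          rw [le_div_iff₀ (by positivity)]; nlinarith
        linarith
    have hdβ : d ^ β ≤ 1 := Real.rpow_le_one hd0 hd1 hβ.le
    nlinarith
theorem stmt_17 (p : ℕ → ℕ) (hp : ∀ n, 0 < p n)
    (Sig1 Sig2 : (n : ℕ) → Matrix (Fin (p n)) (Fin (p n)) ℝ)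
    (hSig1 : ∀ n, (Sig1 n).IsHermitian) (hSig2 : ∀ n, (Sig2 n).IsHermitian)
    (hb1 : ∃ K : ℝ, ∀ n, specNorm (Sig1 n) ≤ K) (hb2 : ∃ K : ℝ, ∀ n, specNorm (Sig2 n) ≤ K)
    (hdiff : Tendsto (fun n => specNorm (Sig1 n - Sig2 n)) atTop (nhds 0))
    (ν : Measure ℝ) [IsProbabilityMeasure ν]
    (hweak : ∀ f : BoundedContinuousFunction ℝ ℝ,
      Tendsto (fun n => ∫ x, f x ∂(esd (Sig2 n) (hSig2 n))) atTop (nhds (∫ x, f x ∂ν)))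
    (β : ℝ) (hβ : 0 < β) (hβ1 : β ≤ 1)
    (Hconst : ℝ) (hH : 0 < Hconst)
    (hHol : ∀ s t : ℝ, |cdf' ν s - cdf' ν t| ≤ Hconst * |s - t| ^ β) :
    ∃ C > (0:ℝ), ∃ N : ℕ, ∀ n ≥ N, ∀ y : ℝ, y ∈ Set.Ioo (0:ℝ) 1 → ∀ A > (0:ℝ),
      kolDist (esd (Sig2 n) (hSig2 n)) (esd (Sig1 n) (hSig1 n)) ≤
        C * (A * specNorm (Sig1 n - Sig2 n) / y ^ 2 + 1 / (y ^ 2 * A) + y ^ β +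
          kolDist (esd (Sig2 n) (hSig2 n)) ν) := by
  obtain ⟨N, hN⟩ : ∃ N : ℕ, ∀ n ≥ N, specNorm (Sig1 n - Sig2 n) ≤ 1 := by
    have h := hdiff.eventually_lt_const (by norm_num : (0:ℝ) < 1)
    obtain ⟨N, hN⟩ := eventually_atTop.mp h
    exact ⟨N, fun n hn => (hN n hn).le⟩
  refine ⟨2 + Hconst, by linarith, N, ?_⟩
  intro n hn y hy A hApos
  obtain ⟨hy0, hy1⟩ := hy
  set d := specNorm (Sig1 n - Sig2 n) with hdd
  have hd0 : 0 ≤ d := specNorm_nonneg _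
  have hd1 : d ≤ 1 := hN n hn
  set μ2 := esd (Sig2 n) (hSig2 n) with hμ2
  set μ1 := esd (Sig1 n) (hSig1 n) with hμ1
  set K := kolDist μ2 ν with hKdef
  have hK0 : 0 ≤ K := Real.iSup_nonneg fun t => abs_nonneg _
  have hbdd : BddAbove (Set.range fun t => |cdf' μ2 t - cdf' ν t|) := by
    refine ⟨1, fun z hz => ?_⟩
    obtain ⟨t, rfl⟩ := hz
    rw [abs_sub_le_iff]
    constructor
    · have h1 := cdf'_esd_le_one (hp n) (Sig2 n) (hSig2 n) t
      have h2 := cdf'_nonneg ν t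
      rw [← hμ2] at h1
      linarith
    · have h1 := cdf'_prob_le_one ν t
      have h2 := cdf'_nonneg μ2 t
      linarith
  have hKs : ∀ s : ℝ, |cdf' μ2 s - cdf' ν s| ≤ K := fun s => le_ciSup hbdd s
  have hq : (0:ℝ) < (p n : ℝ) := by exact_mod_cast hp n
  have hcmp1 : ∀ t : ℝ, cdf' μ1 t ≤ cdf' μ2 (t + d) := by
    intro t
    rw [hμ1, hμ2, cdf'_esd, cdf'_esd, div_eq_mul_inv, div_eq_mul_inv]
    have h := weyl_count (Sig1 n) (Sig2 n) (hSig1 n) (hSig2 n) t d (le_refl d)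
    exact mul_le_mul_of_nonneg_right (by exact_mod_cast h) (by positivity)
  have hcmp2 : ∀ t : ℝ, cdf' μ2 (t - d) ≤ cdf' μ1 t := by
    intro t
    have h := weyl_count (Sig2 n) (Sig1 n) (hSig2 n) (hSig1 n) (t - d) d
      (le_of_eq (specNorm_sub_comm _ _))
    rw [sub_add_cancel] at h
    rw [hμ1, hμ2, cdf'_esd, cdf'_esd, div_eq_mul_inv, div_eq_mul_inv]
    exact mul_le_mul_of_nonneg_right (by exact_mod_cast h) (by positivity)
  have hHol' : ∀ s : ℝ, |cdf' ν s - cdf' ν (s - d)| ≤ Hconst * d ^ β := by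
    intro s
    have h := hHol s (s - d)
    rwa [show s - (s - d) = d by ring, abs_of_nonneg hd0] at h
  have key : kolDist μ2 μ1 ≤ 2 * K + Hconst * d ^ β := by
    have hrfl : kolDist μ2 μ1 = ⨆ t : ℝ, |cdf' μ2 t - cdf' μ1 t| := rfl
    rw [hrfl]
    refine ciSup_le fun t => ?_
    rw [abs_sub_le_iff]
    constructor
    · have h1 := hcmp2 t
      have h2 := hHol' t
      have h3 := abs_le.mp (hKs t)
      have h4 := abs_le.mp (hKs (t - d))
      have h5 := abs_le.mp h2
      linarith [h3.1, h3.2, h4.1, h4.2, h5.1, h5.2]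
    · have h1 := hcmp1 t
      have h2 := hHol' (t + d)
      rw [show t + d - d = t by ring] at h2
      have h3 := abs_le.mp (hKs t)
      have h4 := abs_le.mp (hKs (t + d))
      have h5 := abs_le.mp h2
      linarith [h3.1, h3.2, h4.1, h4.2, h5.1, h5.2]
  calc kolDist μ2 μ1 ≤ 2 * K + Hconst * d ^ β := key
    _ ≤ (2 + Hconst) * (A * d / y ^ 2 + 1 / (y ^ 2 * A) + y ^ β + K) :=
        arith_key Hconst K d y A β hH hK0 hd0 hd1 hy0 hy1 hApos hβ
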